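/- For the 2-dimensional real algebra with basis e₁, e₂ and sole nonzero product e₁·e₁ = e₂ (the nilpotent algebra μ₄), the space of symmetric Harrison 2-cocycles modulo coboundaries is nonzero. -/

import Mathlib

/-- The product of the nilpotent algebra `μ₄` on `ℝ²`: `e₁ · e₁ = e₂` and all
other basis products vanish. -/
def mu4 (x y : ℝ × ℝ) : ℝ × ℝ := (0, x.1 * y.1)

/-- For the 2-dimensional nilpotent algebra `μ₄`, the symmetric Harrison second
cohomology is nonzero: there is a symmetric 2-cocycle which is not a
coboundary. -/
theorem stmt_8 :
    ∃ φ : (ℝ × ℝ) →ₗ[ℝ] (ℝ × ℝ) →ₗ[ℝ] (ℝ × ℝ),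
      (∀ x y, φ x y = φ y x) ∧
      (∀ x y z, mu4 x (φ y z) - φ (mu4 x y) z - mu4 (φ x y) z + φ x (mu4 y z) = 0) ∧
      ¬ ∃ f : (ℝ × ℝ) →ₗ[ℝ] (ℝ × ℝ),
          ∀ x y, φ x y = mu4 x (f y) + mu4 (f x) y - f (mu4 x y) := by
  refine ⟨LinearMap.mk₂ ℝ (fun x y => (x.1 * y.1, 0))
    (by intro x y z; simp [Prod.ext_iff]; ring)
    (by intro c x y; simp [Prod.ext_iff]; ring)
    (by intro x y z; simp [Prod.ext_iff]; ring)
    (by intro c x y; simp [Prod.ext_iff]; ring), ?_, ?_, ?_⟩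
  · intro x y; simp [Prod.ext_iff]; ring
  · intro x y z; simp [mu4, Prod.ext_iff]; ring
  · rintro ⟨f, hf⟩
    have h1 := hf (1, 0) (1, 0)
    have h2 := hf (1, 0) (0, 1)
    simp [mu4, Prod.ext_iff] at h1 h2
    have h0 : (f (0, 0)).2 = 0 := by show (f 0).2 = 0; simp
    linarith [h1.1, h2, h0]
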